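/- The closed unit disk K = {(x, y) ∈ ℝ² : x² + y² ≤ 1} is not algebraically squarable: there is no nonzero real polynomial Q in four variables such that Q(S(a,b,c), a, b, c) = 0 for all (a, b, c) ∈ ℝ³ with (a, b) ≠ (0, 0), where S(a,b,c) is the Lebesgue area of K ∩ {(x, y) : ax + by + c ≤ 0}. -/

import Mathlib

open MvPolynomial

/-- The area of the segment cut from `K` by the line `a x + b y + c = 0`:
the Lebesgue measure of `K ∩ {(x, y) : a x + b y + c ≤ 0}`. -/
noncomputable def segArea (K : Set (ℝ × ℝ)) (a b c : ℝ) : ℝ :=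
  (MeasureTheory.volume (K ∩ {p : ℝ × ℝ | a * p.1 + b * p.2 + c ≤ 0})).toReal

namespace NewtonLemma28

open Real Set MeasureTheory Polynomial Filter

/-! ### Analyticity of sine and cosine -/

lemma analyticAt_csin (z : ℂ) : AnalyticAt ℂ Complex.sin z := by
  have : Complex.sin = fun z =>
      (Complex.exp (-z * Complex.I) - Complex.exp (z * Complex.I)) * Complex.I / 2 := by
    funext z; rfl
  rw [this]
  exact ((((analyticAt_id.neg.mul analyticAt_const).cexp.sub
    (analyticAt_id.mul analyticAt_const).cexp).mul analyticAt_const).div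
      analyticAt_const (by norm_num))

lemma analyticAt_rsin (x : ℝ) : AnalyticAt ℝ Real.sin x := by
  have : Real.sin = fun x : ℝ => Complex.reCLM (Complex.sin (Complex.ofRealCLM x)) := by
    funext x; rfl
  rw [this]
  exact (Complex.reCLM.analyticAt _).restrictScalars.comp
    (((analyticAt_csin _).restrictScalars).comp (Complex.ofRealCLM.analyticAt x))

lemma analyticAt_rcos (x : ℝ) : AnalyticAt ℝ Real.cos x := by
  have : Real.cos = fun x : ℝ => Real.sin (π/2 - x) := by
    funext x; rw [Real.sin_pi_div_two_sub]
  rw [this]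
  exact (analyticAt_rsin _).comp (analyticAt_const.sub analyticAt_id)

/-! ### The area of a circular segment -/

lemma key_integral {t : ℝ} (h1 : -1 ≤ t) (h2 : t ≤ 1) :
    ∫ x in (-1:ℝ)..t, 2 * Real.sqrt (1 - x^2)
      = π/2 + Real.arcsin t + t * Real.sqrt (1 - t^2) := by
  have hcont : ContinuousOn (fun x : ℝ => Real.arcsin x + x * Real.sqrt (1 - x^2)) (Icc (-1) t) :=
    (Real.continuous_arcsin.continuousOn).add
      ((continuous_id.mul ((continuous_const.sub (continuous_pow 2)).sqrt)).continuousOn)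
  have hderiv : ∀ x ∈ Ioo (-1:ℝ) t,
      HasDerivWithinAt (fun x : ℝ => Real.arcsin x + x * Real.sqrt (1 - x^2))
        (2 * Real.sqrt (1 - x^2)) (Ioi x) x := by
    intro x hx
    have hx1 : -1 < x := hx.1
    have hx2 : x < 1 := lt_of_lt_of_le hx.2 h2
    have hu : (0:ℝ) < 1 - x^2 := by nlinarith
    have hsq : Real.sqrt (1 - x^2) > 0 := Real.sqrt_pos.mpr hu
    have hs : HasDerivAt (fun x : ℝ => Real.sqrt (1 - x^2))
        (1 / (2 * Real.sqrt (1 - x^2)) * (0 - 2*x)) x := by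
      have inner : HasDerivAt (fun x : ℝ => 1 - x^2) (0 - 2*x) x := by
        exact ((hasDerivAt_pow 2 x).const_sub (1:ℝ)).congr_deriv (by norm_num)
      exact (Real.hasDerivAt_sqrt (ne_of_gt hu)).comp x inner
    have harc : HasDerivAt Real.arcsin (1 / Real.sqrt (1 - x^2)) x :=
      Real.hasDerivAt_arcsin (by linarith) (by linarith)
    have hmul : HasDerivAt (fun x : ℝ => x * Real.sqrt (1 - x^2))
        (1 * Real.sqrt (1 - x^2) + x * (1 / (2 * Real.sqrt (1 - x^2)) * (0 - 2*x))) x :=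
      (hasDerivAt_id x).mul hs
    have htot := harc.add hmul
    have heq : 1 / Real.sqrt (1 - x^2) + (1 * Real.sqrt (1 - x^2)
        + x * (1 / (2 * Real.sqrt (1 - x^2)) * (0 - 2*x))) = 2 * Real.sqrt (1 - x^2) := by
      have hss : Real.sqrt (1 - x^2) ^ 2 = 1 - x^2 := Real.sq_sqrt (le_of_lt hu)
      field_simp
      nlinarith [hss]
    rw [heq] at htot
    exact htot.hasDerivWithinAt
  have hint : IntervalIntegrable (fun x : ℝ => 2 * Real.sqrt (1 - x^2))
      MeasureTheory.volume (-1) t :=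
    (continuous_const.mul ((continuous_const.sub (continuous_pow 2)).sqrt)).intervalIntegrable _ _
  rw [intervalIntegral.integral_eq_sub_of_hasDeriv_right_of_le h1 hcont hderiv hint]
  rw [Real.arcsin_neg_one]
  norm_num
  ring

lemma volume_slab {t : ℝ} (ht : -1 ≤ t) :
    MeasureTheory.volume ({p : ℝ × ℝ | p.1^2 + p.2^2 ≤ 1} ∩ {p : ℝ × ℝ | p.1 ≤ t})
      = ENNReal.ofReal (∫ x in (-1:ℝ)..t, 2 * Real.sqrt (1 - x^2)) := by
  have hS : MeasurableSet ({p : ℝ × ℝ | p.1^2 + p.2^2 ≤ 1} ∩ {p : ℝ × ℝ | p.1 ≤ t}) := by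
    apply MeasurableSet.inter
    · exact measurableSet_le (by fun_prop) measurable_const
    · exact measurableSet_le (by fun_prop) measurable_const
  rw [MeasureTheory.Measure.volume_eq_prod, MeasureTheory.Measure.prod_apply hS]
  have hslice : ∀ x : ℝ,
      (volume (Prod.mk x ⁻¹' ({p : ℝ × ℝ | p.1^2 + p.2^2 ≤ 1} ∩ {p : ℝ × ℝ | p.1 ≤ t})))
        = (Set.Iic t).indicator (fun x => ENNReal.ofReal (2 * Real.sqrt (1 - x^2))) x := by
    intro x
    by_cases hxt : x ≤ t
    · rw [Set.indicator_of_mem (by exact hxt)]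
      have hset : (Prod.mk x ⁻¹' ({p : ℝ × ℝ | p.1^2 + p.2^2 ≤ 1} ∩ {p : ℝ × ℝ | p.1 ≤ t}))
          = {y : ℝ | y^2 ≤ 1 - x^2} := by
        ext y; simp only [Set.mem_preimage, Set.mem_inter_iff, Set.mem_setOf_eq, hxt, and_true]
        constructor <;> intro h <;> linarith
      rw [hset]
      by_cases hx1 : 0 ≤ 1 - x^2
      · have : {y : ℝ | y^2 ≤ 1 - x^2} = Icc (-Real.sqrt (1-x^2)) (Real.sqrt (1-x^2)) := by
          ext y
          simp only [mem_setOf_eq, mem_Icc, ← abs_le]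
          rw [← Real.sqrt_sq_eq_abs]
          constructor
          · exact fun h => Real.sqrt_le_sqrt h
          · intro h
            nlinarith [Real.sq_sqrt hx1, Real.sq_sqrt (sq_nonneg y), Real.sqrt_nonneg (y^2)]
        rw [this, Real.volume_Icc]
        congr 1; ring
      · have hneg : 1 - x^2 < 0 := lt_of_not_ge hx1
        have hempty : {y : ℝ | y^2 ≤ 1 - x^2} = (∅ : Set ℝ) := by
          ext y; simp only [mem_setOf_eq, mem_empty_iff_false, iff_false]; nlinarith
        have hsq0 : Real.sqrt (1 - x^2) = 0 := Real.sqrt_eq_zero'.mpr (le_of_lt hneg)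
        rw [hempty, measure_empty, hsq0]
        simp
    · rw [Set.indicator_of_notMem (by exact hxt)]
      have : (Prod.mk x ⁻¹' ({p : ℝ × ℝ | p.1^2 + p.2^2 ≤ 1} ∩ {p : ℝ × ℝ | p.1 ≤ t}))
          = (∅ : Set ℝ) := by
        ext y; simp [hxt]
      rw [this, measure_empty]
  simp_rw [hslice]
  rw [MeasureTheory.lintegral_indicator measurableSet_Iic]
  rw [← Set.Iic_union_Ioc_eq_Iic ht,
    MeasureTheory.lintegral_union measurableSet_Ioc (Set.Iic_disjoint_Ioc le_rfl)]
  have hzero : ∫⁻ x in Iic (-1:ℝ), ENNReal.ofReal (2 * Real.sqrt (1 - x^2)) = 0 := by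
    rw [MeasureTheory.setLIntegral_congr_fun measurableSet_Iic
      (fun x hx => ?_), lintegral_zero]
    have hx1 : x ≤ -1 := mem_Iic.mp hx
    have : Real.sqrt (1 - x^2) = 0 := Real.sqrt_eq_zero'.mpr (by nlinarith)
    rw [this]; simp
  rw [hzero, zero_add]
  have hcont : Continuous (fun x : ℝ => 2 * Real.sqrt (1 - x^2)) :=
    continuous_const.mul ((continuous_const.sub (continuous_pow 2)).sqrt)
  have hInt : IntegrableOn (fun x : ℝ => 2 * Real.sqrt (1 - x^2)) (Ioc (-1) t) volume := by
    exact (hcont.integrableOn_Icc (a := -1) (b := t)).mono_set Ioc_subset_Icc_self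
  rw [intervalIntegral.integral_of_le ht,
    MeasureTheory.ofReal_integral_eq_lintegral_ofReal hInt
      (Filter.Eventually.of_forall (fun x => by positivity))]

lemma segArea_formula {a b c : ℝ} (hab : a^2 + b^2 = 1) (hc1 : -1 < c) (hc2 : c < 1) :
    segArea {p : ℝ × ℝ | p.1^2 + p.2^2 ≤ 1} a b c
      = π/2 - Real.arcsin c - c * Real.sqrt (1 - c^2) := by
  set f : (ℝ × ℝ) →ₗ[ℝ] (ℝ × ℝ) :=
    Matrix.toLin (Module.Basis.finTwoProd ℝ) (Module.Basis.finTwoProd ℝ) !![a, b; -b, a] with hf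
  have hdet : LinearMap.det f = 1 := by
    rw [hf, LinearMap.det_toLin, Matrix.det_fin_two_of]; nlinarith
  have hsetEq : f ⁻¹' ({p : ℝ × ℝ | p.1^2 + p.2^2 ≤ 1} ∩ {p : ℝ × ℝ | p.1 ≤ -c})
      = {p : ℝ × ℝ | p.1^2 + p.2^2 ≤ 1} ∩ {p : ℝ × ℝ | a * p.1 + b * p.2 + c ≤ 0} := by
    ext p
    simp only [Set.mem_preimage, Set.mem_inter_iff, Set.mem_setOf_eq, hf,
      Matrix.toLin_finTwoProd_apply]
    constructor
    · rintro ⟨h1, h2⟩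
      constructor
      · nlinarith
      · linarith
    · rintro ⟨h1, h2⟩
      constructor
      · nlinarith
      · linarith
  have hvol : MeasureTheory.volume
      ({p : ℝ × ℝ | p.1^2 + p.2^2 ≤ 1} ∩ {p : ℝ × ℝ | a * p.1 + b * p.2 + c ≤ 0})
      = MeasureTheory.volume ({p : ℝ × ℝ | p.1^2 + p.2^2 ≤ 1} ∩ {p : ℝ × ℝ | p.1 ≤ -c}) := by
    rw [← hsetEq, MeasureTheory.Measure.addHaar_preimage_linearMap volume
      (by rw [hdet]; norm_num)]
    rw [hdet]; simp
  have ht1 : (-1:ℝ) ≤ -c := by linarith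
  have ht2 : (-c:ℝ) ≤ 1 := by linarith
  have hval := volume_slab ht1
  rw [key_integral ht1 ht2] at hval
  have hnonneg : 0 ≤ π/2 + Real.arcsin (-c) + (-c) * Real.sqrt (1 - (-c)^2) := by
    rw [← key_integral ht1 ht2]
    apply intervalIntegral.integral_nonneg ht1
    intro x _; positivity
  unfold segArea
  rw [hvol, hval, ENNReal.toReal_ofReal hnonneg, Real.arcsin_neg]
  have : (1 : ℝ) - (-c)^2 = 1 - c^2 := by ring
  rw [this]; ring

lemma segArea_theta {a b : ℝ} (hab : a^2 + b^2 ≠ 0) {θ : ℝ}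
    (hθ : θ ∈ Ioo (-(π/2)) (π/2)) :
    segArea {p : ℝ × ℝ | p.1^2 + p.2^2 ≤ 1} a b (Real.sqrt (a^2+b^2) * Real.sin θ)
      = π/2 - θ - Real.sin θ * Real.cos θ := by
  set r := Real.sqrt (a^2+b^2) with hr
  have hr2 : r^2 = a^2 + b^2 := Real.sq_sqrt (by positivity)
  have hrpos : 0 < r := Real.sqrt_pos.mpr (lt_of_le_of_ne (by positivity) (Ne.symm hab))
  have hcos : 0 < Real.cos θ := Real.cos_pos_of_mem_Ioo hθ
  have hsin1 : Real.sin θ < 1 := by nlinarith [Real.sin_sq_add_cos_sq θ]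
  have hsin2 : -1 < Real.sin θ := by nlinarith [Real.sin_sq_add_cos_sq θ]
  have hset : {p : ℝ × ℝ | a * p.1 + b * p.2 + r * Real.sin θ ≤ 0}
      = {p : ℝ × ℝ | (a/r) * p.1 + (b/r) * p.2 + Real.sin θ ≤ 0} := by
    ext p
    simp only [Set.mem_setOf_eq]
    have key : a * p.1 + b * p.2 + r * Real.sin θ
        = r * ((a/r) * p.1 + (b/r) * p.2 + Real.sin θ) := by
      field_simp
    rw [key]
    constructor
    · intro h; nlinarith
    · intro h; nlinarith
  have hab' : (a/r)^2 + (b/r)^2 = 1 := by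
    field_simp; nlinarith
  have := segArea_formula hab' hsin2 hsin1
  unfold segArea at this ⊢
  rw [hset, this, Real.arcsin_sin (le_of_lt hθ.1) (le_of_lt hθ.2)]
  have h1 : (1:ℝ) - Real.sin θ ^ 2 = Real.cos θ ^ 2 := by
    nlinarith [Real.sin_sq_add_cos_sq θ]
  rw [h1, Real.sqrt_sq (le_of_lt hcos)]

/-! ### Two-variable polynomial evaluation -/

/-- Evaluate an iterated polynomial: inner variable at `s`, outer variable at `c`. -/
noncomputable def ev2 (s c : ℝ) (P : Polynomial (Polynomial ℝ)) : ℝ :=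
  Polynomial.eval s (Polynomial.eval (Polynomial.C c) P)

lemma poly_eval_analytic (a : Polynomial ℝ) (u : ℝ → ℝ) (hu : ∀ x, AnalyticAt ℝ u x) :
    ∀ x, AnalyticAt ℝ (fun θ => Polynomial.eval (u θ) a) x := by
  induction a using Polynomial.induction_on' with
  | add p q hp hq =>
    intro x
    simp only [Polynomial.eval_add]
    exact (hp x).add (hq x)
  | monomial n t =>
    intro x
    simp only [Polynomial.eval_monomial]
    exact analyticAt_const.mul ((hu x).pow n)

lemma ev2_analytic (P : Polynomial (Polynomial ℝ)) (u v : ℝ → ℝ)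
    (hu : ∀ x, AnalyticAt ℝ u x) (hv : ∀ x, AnalyticAt ℝ v x) :
    ∀ x, AnalyticAt ℝ (fun θ => ev2 (u θ) (v θ) P) x := by
  induction P using Polynomial.induction_on' with
  | add p q hp hq =>
    intro x
    simp only [ev2, Polynomial.eval_add]
    exact (hp x).add (hq x)
  | monomial n a =>
    intro x
    simp only [ev2, Polynomial.eval_monomial, Polynomial.eval_mul, Polynomial.eval_pow,
      Polynomial.eval_C]
    exact (poly_eval_analytic a u hu x).mul ((hv x).pow n)

lemma ev2_continuous (P : Polynomial (Polynomial ℝ)) (u v : ℝ → ℝ)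
    (hu : ∀ x, AnalyticAt ℝ u x) (hv : ∀ x, AnalyticAt ℝ v x) :
    Continuous (fun θ => ev2 (u θ) (v θ) P) :=
  continuous_iff_continuousAt.mpr fun x => (ev2_analytic P u v hu hv x).continuousAt

/-! ### Transcendence of the segment-area function -/

lemma sin_ne_one_of_small {θ δ : ℝ} (hs : Real.sin θ = 1) (h0 : 0 < δ) (h1 : δ ≤ 1) :
    Real.sin (θ + δ) ≠ 1 := by
  have hc : Real.cos θ = 0 := by nlinarith [Real.sin_sq_add_cos_sq θ]
  rw [Real.sin_add, hs, hc]
  simp only [one_mul, zero_mul, add_zero]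
  intro hcontra
  rcases (Real.cos_eq_one_iff δ).mp hcontra with ⟨n, hn⟩
  have hpi : (3:ℝ) < π := by nlinarith [Real.pi_gt_three]
  rcases lt_trichotomy n 0 with h | h | h
  · have : (n:ℝ) ≤ -1 := by exact_mod_cast Int.le_sub_one_of_lt h
    nlinarith
  · subst h; simp at hn; linarith
  · have : (1:ℝ) ≤ (n:ℝ) := by exact_mod_cast h
    nlinarith

lemma core {r : ℝ} (hr : r ≠ 0)
    (hcontinuous : ∀ P : Polynomial (Polynomial ℝ), Continuous
      (fun θ : ℝ => ev2 (π/2 - θ - Real.sin θ * Real.cos θ) (r * Real.sin θ) P)) :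
    ∀ P : Polynomial (Polynomial ℝ),
      (∀ θ : ℝ, ev2 (π/2 - θ - Real.sin θ * Real.cos θ) (r * Real.sin θ) P = 0) → P = 0 := by
  suffices H : ∀ n : ℕ, ∀ P : Polynomial (Polynomial ℝ), P.natDegree = n →
      (∀ θ : ℝ, ev2 (π/2 - θ - Real.sin θ * Real.cos θ) (r * Real.sin θ) P = 0) → P = 0 by
    intro P hP; exact H P.natDegree P rfl hP
  intro n
  induction n using Nat.strong_induction_on with
  | _ n IH =>
    intro P hdeg hvan
    by_cases hP0 : P = 0
    · exact hP0
    exfalso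
    set q : Polynomial ℝ := Polynomial.eval (Polynomial.C r) P with hq
    have hq0 : q = 0 := by
      apply Polynomial.eq_zero_of_infinite_isRoot
      apply Set.infinite_of_injective_forall_mem
        (f := fun n : ℕ => -((n:ℝ) * (2 * π)))
      case hi =>
        intro m k hmk
        have hπ : (0:ℝ) < π := Real.pi_pos
        simp only [neg_inj] at hmk
        have : (m:ℝ) = k := by nlinarith
        exact_mod_cast this
      case hf =>
        intro k
        have hθ := hvan (π/2 + (k:ℝ) * (2 * π))
        have hsin : Real.sin (π/2 + (k:ℝ) * (2 * π)) = 1 := by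
          rw [Real.sin_add_nat_mul_two_pi, Real.sin_pi_div_two]
        have hcos : Real.cos (π/2 + (k:ℝ) * (2 * π)) = 0 := by
          rw [Real.cos_add_nat_mul_two_pi, Real.cos_pi_div_two]
        rw [hsin, hcos] at hθ
        simp only [mul_one, mul_zero, sub_zero] at hθ
        have : π/2 - (π/2 + (k:ℝ) * (2 * π)) = -((k:ℝ) * (2 * π)) := by ring
        rw [this] at hθ
        exact hθ
    have hdvd : Polynomial.X - Polynomial.C (Polynomial.C r) ∣ P :=
      Polynomial.dvd_iff_isRoot.mpr hq0
    obtain ⟨P', hP'⟩ := hdvd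
    have hvan' : ∀ θ : ℝ, Real.sin θ ≠ 1 →
        ev2 (π/2 - θ - Real.sin θ * Real.cos θ) (r * Real.sin θ) P' = 0 := by
      intro θ hθ
      have := hvan θ
      rw [hP'] at this
      have hfac : ev2 (π/2 - θ - Real.sin θ * Real.cos θ) (r * Real.sin θ)
          ((Polynomial.X - Polynomial.C (Polynomial.C r)) * P')
          = (r * Real.sin θ - r)
            * ev2 (π/2 - θ - Real.sin θ * Real.cos θ) (r * Real.sin θ) P' := by
        simp [ev2]
      rw [hfac] at this
      have hne : r * Real.sin θ - r ≠ 0 := by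
        intro h
        apply hθ
        have : r * (Real.sin θ - 1) = 0 := by linarith
        rcases mul_eq_zero.mp this with h | h
        · exact absurd h hr
        · linarith
      exact (mul_eq_zero.mp this).resolve_left hne
    have hvanAll : ∀ θ : ℝ,
        ev2 (π/2 - θ - Real.sin θ * Real.cos θ) (r * Real.sin θ) P' = 0 := by
      intro θ₀
      by_cases hs : Real.sin θ₀ = 1
      · have hc : Real.cos θ₀ = 0 := by nlinarith [Real.sin_sq_add_cos_sq θ₀]
        have hseq : Filter.Tendsto (fun k : ℕ => θ₀ + 1/((k:ℝ)+1)) Filter.atTop (nhds θ₀) := by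
          have := tendsto_one_div_add_atTop_nhds_zero_nat (𝕜 := ℝ)
          simpa using tendsto_const_nhds.add this
        have h1 := ((hcontinuous P').tendsto θ₀).comp hseq
        have h2 : (fun k : ℕ => ev2 (π/2 - (θ₀ + 1/((k:ℝ)+1))
            - Real.sin (θ₀ + 1/((k:ℝ)+1)) * Real.cos (θ₀ + 1/((k:ℝ)+1)))
            (r * Real.sin (θ₀ + 1/((k:ℝ)+1))) P') = fun _ => (0:ℝ) := by
          funext k
          apply hvan'
          apply sin_ne_one_of_small hs
          · positivity
          · rw [div_le_one (by positivity)]; linarith [Nat.cast_nonneg (α := ℝ) k]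
        rw [Function.comp_def, h2] at h1
        exact (tendsto_nhds_unique h1 tendsto_const_nhds).symm ▸ rfl
      · exact hvan' θ₀ hs
    have hX : (Polynomial.X - Polynomial.C (Polynomial.C r))
        ≠ (0 : Polynomial (Polynomial ℝ)) := Polynomial.X_sub_C_ne_zero _
    have hP'0 : P' ≠ 0 := by
      intro h; apply hP0; rw [hP', h, mul_zero]
    have hdeg' : P.natDegree = P'.natDegree + 1 := by
      rw [hP', Polynomial.natDegree_mul hX hP'0, Polynomial.natDegree_X_sub_C]; ring
    have hlt : P'.natDegree < n := by omega
    exact hP'0 (IH P'.natDegree hlt P' rfl hvanAll)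

/-! ### Relating `MvPolynomial` evaluation to `ev2` -/

lemma evalA_eq (Q : MvPolynomial (Fin 4) ℝ) (x : Fin 4 → ℝ) (t : ℝ) :
    Polynomial.eval t (MvPolynomial.aeval
        (fun i : Fin 4 => if i = 1 then Polynomial.X else Polynomial.C (x i)) Q)
      = MvPolynomial.eval ![x 0, t, x 2, x 3] Q := by
  have h := MvPolynomial.eval₂_comp_left (Polynomial.evalRingHom t)
    (algebraMap ℝ (Polynomial ℝ))
    (fun i : Fin 4 => if i = 1 then Polynomial.X else Polynomial.C (x i)) Q
  simp only [Polynomial.coe_evalRingHom] at h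
  rw [MvPolynomial.aeval_def, h]
  have hf : (Polynomial.evalRingHom t).comp (algebraMap ℝ (Polynomial ℝ)) = RingHom.id ℝ := by
    ext r; simp
  have hg : (Polynomial.eval t ∘ fun i : Fin 4 =>
      if i = 1 then Polynomial.X else Polynomial.C (x i)) = ![x 0, t, x 2, x 3] := by
    funext i; fin_cases i <;> simp
  rw [hf, hg, MvPolynomial.eval₂_id]

lemma ev2_aeval (Q : MvPolynomial (Fin 4) ℝ) (a b : ℝ) (s c : ℝ) :
    ev2 s c (MvPolynomial.aeval
        (![Polynomial.C Polynomial.X, Polynomial.C (Polynomial.C a),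
           Polynomial.C (Polynomial.C b), Polynomial.X] : Fin 4 → Polynomial (Polynomial ℝ)) Q)
      = MvPolynomial.eval ![s, a, b, c] Q := by
  unfold ev2
  have h1 := MvPolynomial.eval₂_comp_left (Polynomial.evalRingHom (Polynomial.C c))
    (algebraMap ℝ (Polynomial (Polynomial ℝ)))
    (![Polynomial.C Polynomial.X, Polynomial.C (Polynomial.C a),
       Polynomial.C (Polynomial.C b), Polynomial.X]) Q
  simp only [Polynomial.coe_evalRingHom] at h1
  rw [MvPolynomial.aeval_def, h1]
  have h2 := MvPolynomial.eval₂_comp_left (Polynomial.evalRingHom s)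
    ((Polynomial.evalRingHom (Polynomial.C c)).comp (algebraMap ℝ (Polynomial (Polynomial ℝ))))
    (Polynomial.eval (Polynomial.C c) ∘
      ![Polynomial.C Polynomial.X, Polynomial.C (Polynomial.C a),
        Polynomial.C (Polynomial.C b), Polynomial.X]) Q
  simp only [Polynomial.coe_evalRingHom] at h2
  rw [h2]
  have hf : (Polynomial.evalRingHom s).comp
      ((Polynomial.evalRingHom (Polynomial.C c)).comp
        (algebraMap ℝ (Polynomial (Polynomial ℝ)))) = RingHom.id ℝ := by
    ext r; simp [Polynomial.algebraMap_apply]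
  have hg : (Polynomial.eval s ∘ (Polynomial.eval (Polynomial.C c) ∘
      ![Polynomial.C Polynomial.X, Polynomial.C (Polynomial.C a),
        Polynomial.C (Polynomial.C b), Polynomial.X])) = ![s, a, b, c] := by
    funext i; fin_cases i <;> simp
  rw [hf, hg, MvPolynomial.eval₂_id]

end NewtonLemma28

/-- Newton's Lemma 28 for Kepler's ovals: the closed unit disk is not algebraically
squarable. -/
theorem unit_disk_not_algebraically_squarable :
    ¬ ∃ Q : MvPolynomial (Fin 4) ℝ, Q ≠ 0 ∧
        ∀ a b c : ℝ, (a, b) ≠ (0, 0) →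
          eval ![segArea {p : ℝ × ℝ | p.1 ^ 2 + p.2 ^ 2 ≤ 1} a b c, a, b, c] Q = 0 := by
  open NewtonLemma28 Real Set Polynomial in
  rintro ⟨Q, hQ, hvan⟩
  -- a point where `Q` does not vanish
  have hex : ∃ y : Fin 4 → ℝ, MvPolynomial.eval y Q ≠ 0 := by
    by_contra h
    push_neg at h
    exact hQ (MvPolynomial.funext (fun y => by rw [h y, map_zero]))
  obtain ⟨x, hx⟩ := hex
  -- perturb the `a`-coordinate so that it is nonzero
  set A : Polynomial ℝ := MvPolynomial.aeval
    (fun i : Fin 4 => if i = 1 then Polynomial.X else Polynomial.C (x i)) Q with hA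
  have hxv : (![x 0, x 1, x 2, x 3] : Fin 4 → ℝ) = x := by
    funext i; fin_cases i <;> rfl
  have hAne : A ≠ 0 := by
    intro h
    apply hx
    have := evalA_eq Q x (x 1)
    rw [← hA, h, Polynomial.eval_zero, hxv] at this
    exact this.symm
  obtain ⟨a₁, ha₁⟩ :=
    (((Polynomial.finite_setOf_isRoot hAne).union (Set.finite_singleton 0)).infinite_compl).nonempty
  simp only [Set.mem_compl_iff, Set.mem_union, Set.mem_setOf_eq, Set.mem_singleton_iff,
    not_or] at ha₁
  obtain ⟨ha₁root, ha₁0⟩ := ha₁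
  have hwitness : MvPolynomial.eval ![x 0, a₁, x 2, x 3] Q ≠ 0 := by
    rw [← evalA_eq Q x a₁, ← hA]
    exact ha₁root
  -- the two-variable specialization of `Q`
  set R : Polynomial (Polynomial ℝ) := MvPolynomial.aeval
    (![Polynomial.C Polynomial.X, Polynomial.C (Polynomial.C a₁),
       Polynomial.C (Polynomial.C (x 2)), Polynomial.X]
        : Fin 4 → Polynomial (Polynomial ℝ)) Q with hR
  have hRne : R ≠ 0 := by
    intro h
    apply hwitness
    have := ev2_aeval Q a₁ (x 2) (x 0) (x 3)
    rw [← hR, h] at this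
    simp [NewtonLemma28.ev2] at this
    exact this.symm
  -- geometric setup
  have hpos : 0 < a₁^2 + (x 2)^2 := by positivity
  set r : ℝ := Real.sqrt (a₁^2 + (x 2)^2) with hrdef
  have hr : r ≠ 0 := Real.sqrt_ne_zero'.mpr hpos
  -- the evaluated identity on the interval
  have hzero : ∀ θ ∈ Set.Ioo (-(π/2)) (π/2),
      NewtonLemma28.ev2 (π/2 - θ - Real.sin θ * Real.cos θ) (r * Real.sin θ) R = 0 := by
    intro θ hθ
    have hv := hvan a₁ (x 2) (r * Real.sin θ) (fun h => ha₁0 (congrArg Prod.fst h))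
    have hseg := segArea_theta (a := a₁) (b := x 2) (ne_of_gt hpos) hθ
    rw [← hrdef] at hseg
    have hpow : {p : ℝ × ℝ | p.1 ^ 2 + p.2 ^ 2 ≤ 1} = {p : ℝ × ℝ | p.1^2 + p.2^2 ≤ 1} := rfl
    rw [hpow, hseg] at hv
    rw [hR, ev2_aeval]
    exact hv
  -- analytic continuation to all of ℝ
  have hu : ∀ y : ℝ, AnalyticAt ℝ (fun θ : ℝ => π/2 - θ - Real.sin θ * Real.cos θ) y :=
    fun y => (analyticAt_const.sub analyticAt_id).sub
      ((analyticAt_rsin y).mul (analyticAt_rcos y))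
  have hv' : ∀ y : ℝ, AnalyticAt ℝ (fun θ : ℝ => r * Real.sin θ) y :=
    fun y => analyticAt_const.mul (analyticAt_rsin y)
  have hAnalytic : AnalyticOnNhd ℝ
      (fun θ : ℝ => NewtonLemma28.ev2 (π/2 - θ - Real.sin θ * Real.cos θ) (r * Real.sin θ) R)
      Set.univ := fun y _ => ev2_analytic R _ _ hu hv' y
  have hmem : Set.Ioo (-(π/2)) (π/2) ∈ nhds (0:ℝ) := by
    apply isOpen_Ioo.mem_nhds
    constructor
    · linarith [Real.pi_pos]
    · linarith [Real.pi_pos]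
  have hEq0 : (fun θ : ℝ => NewtonLemma28.ev2
      (π/2 - θ - Real.sin θ * Real.cos θ) (r * Real.sin θ) R) =ᶠ[nhds (0:ℝ)] 0 :=
    Filter.eventually_of_mem hmem (fun θ hθ => hzero θ hθ)
  have hAll := hAnalytic.eqOn_zero_of_preconnected_of_eventuallyEq_zero
    isPreconnected_univ (Set.mem_univ (0:ℝ)) hEq0
  -- the transcendence core: R must be zero
  exact hRne (core hr (fun P => ev2_continuous P _ _ hu hv') R
    (fun θ => hAll (Set.mem_univ θ)))
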